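/- Let K ⊆ ℝⁿ be a convex set and let C₁, C₂ ⊆ K be closed convex sets such that (boundary of C₁) ∩ (boundary of C₂) ⊆ boundary of K. Suppose K, C₁, C₂ are full-dimensional (have nonempty interior), and suppose C₁ and C₂ are not weakly separable (i.e., there is no hyperplane H_{a,b} = {x : ⟨a,x⟩ = b}, a ≠ 0, with C₁ ⊆ {x : ⟨a,x⟩ ≤ b} and C₂ ⊆ {x : ⟨a,x⟩ ≥ b}). Then C₁ ∪ C₂ is convex. -/

import Mathlib

open scoped RealInnerProductSpace

open Set

/-- Exit lemma: along the segment from `x ∈ C` towards `y`, if the point at parameter `b`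
is outside the closed convex set `C`, there is a last parameter `t < b` still in `C`. -/
lemma exit_param {E : Type*} [NormedAddCommGroup E] [NormedSpace ℝ E]
    {C : Set E} (hC : Convex ℝ C) (hCc : IsClosed C) {x y : E} (hx : x ∈ C)
    {b : ℝ} (hb0 : 0 < b) (hb1 : b ≤ 1) (hz : x + b • (y - x) ∉ C) :
    ∃ t, 0 ≤ t ∧ t < b ∧ x + t • (y - x) ∈ C ∧
      ∀ s, t < s → s ≤ 1 → x + s • (y - x) ∉ C := by
  set p : ℝ → E := fun t => x + t • (y - x) with hp
  have hpc : Continuous p := by fun_prop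
  set A : Set ℝ := Icc (0:ℝ) 1 ∩ p ⁻¹' C with hA
  have hAne : A.Nonempty := ⟨0, ⟨le_refl 0, zero_le_one⟩, by simp [hp, hx]⟩
  have hAcpt : IsCompact A := isCompact_Icc.inter_right (hCc.preimage hpc)
  have htA : sSup A ∈ A := hAcpt.sSup_mem hAne
  set t := sSup A with ht
  have ht0 : 0 ≤ t := htA.1.1
  have ht1 : t ≤ 1 := htA.1.2
  have htC : p t ∈ C := htA.2
  have hmax : ∀ s, t < s → s ≤ 1 → p s ∉ C := by
    intro s hts hs1 hsC
    have : s ∈ A := ⟨⟨ht0.trans hts.le, hs1⟩, hsC⟩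
    exact absurd (le_csSup hAcpt.bddAbove this) (not_le.mpr hts)
  have htb : t < b := by
    rcases lt_trichotomy t b with h | h | h
    · exact h
    · exact absurd (h ▸ htC) hz
    · exfalso
      have ht0' : 0 < t := hb0.trans h
      have hcomb : (1 - b / t) • x + (b / t) • p t = p b := by
        rw [hp]
        match_scalars <;> field_simp <;> ring
      have hbt : b / t ≤ 1 := by rw [div_le_one ht0']; exact h.le
      have h0bt : 0 ≤ b / t := by positivity
      refine hz ?_
      show p b ∈ C
      rw [← hcomb]
      exact hC hx htC (by linarith) h0bt (by ring)
  exact ⟨t, ht0, htb, htC, hmax⟩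

/-- Key lemma: segment between a point of `C₁` and a point of `C₂` stays in the union,
assuming a common interior point and the boundary condition. -/
lemma key_segment {E : Type*} [NormedAddCommGroup E] [NormedSpace ℝ E]
    {K C₁ C₂ : Set E} (hK : Convex ℝ K) (h1K : C₁ ⊆ K) (h2K : C₂ ⊆ K)
    (h1c : IsClosed C₁) (h2c : IsClosed C₂) (h1 : Convex ℝ C₁) (h2 : Convex ℝ C₂)
    (hbd : frontier C₁ ∩ frontier C₂ ⊆ frontier K)
    {w : E} (hw1 : w ∈ interior C₁) (hw2 : w ∈ interior C₂)
    {x y : E} (hx : x ∈ C₁) (hy : y ∈ C₂) : segment ℝ x y ⊆ C₁ ∪ C₂ := by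
  intro z hz
  by_contra hzc
  rw [Set.mem_union] at hzc
  push_neg at hzc
  obtain ⟨hz1, hz2⟩ := hzc
  obtain ⟨a, b, ha, hb, hab, hzab⟩ := hz
  set p : ℝ → E := fun t => x + t • (y - x) with hp
  have hpb : p b = z := by rw [hp, ← hzab]; match_scalars <;> linarith
  have hb0 : 0 < b := by
    rcases hb.lt_or_eq with h | h
    · exact h
    · exfalso; apply hz1
      rw [← hzab, ← h]
      have ha1 : a = 1 := by linarith
      simpa [ha1] using hx
  have hb1 : b < 1 := by
    rcases ha.lt_or_eq with h | h
    · linarith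
    · exfalso; apply hz2
      rw [← hzab, ← h]
      have hb1' : b = 1 := by linarith
      simpa [hb1'] using hy
  -- exit parameters
  obtain ⟨t₁, ht₁0, ht₁b, ht₁C, ht₁max⟩ := exit_param h1 h1c hx hb0 hb1.le (hpb ▸ hz1)
  have hz2' : y + (1 - b) • (x - y) ∉ C₂ := by
    have : y + (1 - b) • (x - y) = p b := by rw [hp]; match_scalars <;> ring
    rw [this, hpb]; exact hz2
  obtain ⟨τ, hτ0, hτb, hτC, hτmax⟩ := exit_param h2 h2c hy (by linarith) (by linarith) hz2'
  set t₂ : ℝ := 1 - τ with ht₂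
  have hqp : ∀ s : ℝ, y + (1 - s) • (x - y) = p s := by
    intro s; rw [hp]; match_scalars <;> ring
  have ht₂C : p t₂ ∈ C₂ := by rw [← hqp]; simpa [ht₂] using hτC
  have ht₂b : b < t₂ := by simp only [ht₂]; linarith
  have ht₂1 : t₂ ≤ 1 := by simp only [ht₂]; linarith
  have ht₂max : ∀ s, 0 ≤ s → s < t₂ → p s ∉ C₂ := by
    intro s hs0 hst hsC
    exact hτmax (1 - s) (by simp only [ht₂] at hst; linarith) (by linarith)
      (by rw [hqp]; exact hsC)
  -- gauge setup
  set D₁ : Set E := (fun v => w + v) ⁻¹' C₁ with hD₁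
  set D₂ : Set E := (fun v => w + v) ⁻¹' C₂ with hD₂
  have hhom : ∀ s : Set E, (fun v => w + v) ⁻¹' s = (Homeomorph.addLeft w) ⁻¹' s := by
    intro s; rfl
  have hD₁conv : Convex ℝ D₁ := h1.translate_preimage_right w
  have hD₂conv : Convex ℝ D₂ := h2.translate_preimage_right w
  have hD₁int : interior D₁ = (fun v => w + v) ⁻¹' interior C₁ := by
    rw [hD₁, hhom, hhom, Homeomorph.preimage_interior]
  have hD₂int : interior D₂ = (fun v => w + v) ⁻¹' interior C₂ := by
    rw [hD₂, hhom, hhom, Homeomorph.preimage_interior]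
  have hD₁fr : frontier D₁ = (fun v => w + v) ⁻¹' frontier C₁ := by
    rw [hD₁, hhom, hhom, Homeomorph.preimage_frontier]
  have hD₂fr : frontier D₂ = (fun v => w + v) ⁻¹' frontier C₂ := by
    rw [hD₂, hhom, hhom, Homeomorph.preimage_frontier]
  have hD₁n : D₁ ∈ nhds (0 : E) := by
    rw [← mem_interior_iff_mem_nhds, hD₁int]
    simpa using hw1
  have hD₂n : D₂ ∈ nhds (0 : E) := by
    rw [← mem_interior_iff_mem_nhds, hD₂int]
    simpa using hw2
  have hD₁c : IsClosed D₁ := h1c.preimage (by fun_prop)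
  have hD₂c : IsClosed D₂ := h2c.preimage (by fun_prop)
  have hmem₁ : ∀ v : E, v ∈ C₁ ↔ gauge D₁ (v - w) ≤ 1 := by
    intro v
    rw [gauge_le_one_iff_mem_closure hD₁conv hD₁n, hD₁c.closure_eq, hD₁, Set.mem_preimage]
    simp
  have hmem₂ : ∀ v : E, v ∈ C₂ ↔ gauge D₂ (v - w) ≤ 1 := by
    intro v
    rw [gauge_le_one_iff_mem_closure hD₂conv hD₂n, hD₂c.closure_eq, hD₂, Set.mem_preimage]
    simp
  -- the function G
  set G : ℝ → ℝ := fun t => gauge D₁ (p t - w) - gauge D₂ (p t - w) with hG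
  have hGc : Continuous G := by
    apply Continuous.sub
    · exact (continuous_gauge hD₁conv hD₁n).comp (by fun_prop)
    · exact (continuous_gauge hD₂conv hD₂n).comp (by fun_prop)
  have hGt₁ : G t₁ < 0 := by
    have h1' : gauge D₁ (p t₁ - w) ≤ 1 := (hmem₁ _).mp ht₁C
    have h2' : ¬ gauge D₂ (p t₁ - w) ≤ 1 := fun h => ht₂max t₁ ht₁0 (ht₁b.trans ht₂b) ((hmem₂ _).mpr h)
    rw [hG]; push_neg at h2'; simpa using lt_of_le_of_lt h1' h2'
  have hGt₂ : 0 < G t₂ := by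
    have h1' : ¬ gauge D₁ (p t₂ - w) ≤ 1 := fun h => ht₁max t₂ (ht₁b.trans ht₂b) ht₂1 ((hmem₁ _).mpr h)
    have h2' : gauge D₂ (p t₂ - w) ≤ 1 := (hmem₂ _).mp ht₂C
    rw [hG]; push_neg at h1'; simpa using lt_of_le_of_lt h2' h1'
  have ht₁t₂ : t₁ ≤ t₂ := (ht₁b.trans ht₂b).le
  obtain ⟨c, hcI, hGc0⟩ : ∃ c ∈ Icc t₁ t₂, G c = 0 := by
    have := intermediate_value_Icc ht₁t₂ hGc.continuousOn
    have h0 : (0:ℝ) ∈ Icc (G t₁) (G t₂) := ⟨hGt₁.le, hGt₂.le⟩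
    obtain ⟨c, hc, hc0⟩ := this h0
    exact ⟨c, hc, hc0⟩
  have hct₁ : t₁ < c := by
    rcases hcI.1.lt_or_eq with h | h
    · exact h
    · exfalso; rw [← h] at hGc0; linarith [hGt₁, hGc0]
  have hct₂ : c < t₂ := by
    rcases hcI.2.lt_or_eq with h | h
    · exact h
    · exfalso; rw [h] at hGc0; linarith [hGt₂, hGc0]
  have hpc1 : p c ∉ C₁ := ht₁max c hct₁ (hct₂.le.trans ht₂1)
  have hpc2 : p c ∉ C₂ := ht₂max c (ht₁0.trans hct₁.le) hct₂
  set γ : ℝ := gauge D₁ (p c - w) with hγ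
  have hγeq : gauge D₂ (p c - w) = γ := by
    rw [hγ]; have := hGc0; rw [hG] at this; simp at this; linarith
  have hγ1 : 1 < γ := by
    by_contra h
    push_neg at h
    exact hpc1 ((hmem₁ _).mpr h)
  have hγ0 : 0 < γ := lt_trans one_pos hγ1
  set q : E := w + γ⁻¹ • (p c - w) with hq
  have hqw : q - w = γ⁻¹ • (p c - w) := by rw [hq]; abel
  have hg1 : gauge D₁ (q - w) = 1 := by
    rw [hqw, gauge_smul_of_nonneg (inv_nonneg.mpr hγ0.le), smul_eq_mul, ← hγ,
      inv_mul_cancel₀ hγ0.ne']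
  have hg2 : gauge D₂ (q - w) = 1 := by
    rw [hqw, gauge_smul_of_nonneg (inv_nonneg.mpr hγ0.le), smul_eq_mul, hγeq,
      inv_mul_cancel₀ hγ0.ne']
  have hqfr1 : q ∈ frontier C₁ := by
    have := (gauge_eq_one_iff_mem_frontier hD₁conv hD₁n).mp hg1
    rw [hD₁fr, Set.mem_preimage] at this
    simpa using this
  have hqfr2 : q ∈ frontier C₂ := by
    have := (gauge_eq_one_iff_mem_frontier hD₂conv hD₂n).mp hg2
    rw [hD₂fr, Set.mem_preimage] at this
    simpa using this
  have hqfrK : q ∈ frontier K := hbd ⟨hqfr1, hqfr2⟩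
  -- but q is in the interior of K
  have hwK : w ∈ interior K := interior_mono h1K hw1
  have hpcK : p c ∈ K := by
    have h0c : 0 ≤ c := ht₁0.trans hct₁.le
    have hc1 : c ≤ 1 := hct₂.le.trans ht₂1
    have : (1 - c) • x + c • y ∈ K := hK (h1K hx) (h2K hy) (by linarith) h0c (by ring)
    have heq : (1 - c) • x + c • y = p c := by rw [hp]; match_scalars <;> ring
    rwa [heq] at this
  have hqint : q ∈ interior K := by
    apply hK.openSegment_interior_self_subset_interior hwK hpcK
    refine ⟨1 - γ⁻¹, γ⁻¹, ?_, ?_, by ring, ?_⟩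
    · have : γ⁻¹ < 1 := by rw [inv_lt_one_iff₀]; right; exact hγ1
      linarith
    · positivity
    · rw [hq]; match_scalars <;> ring
  rw [frontier, Set.mem_diff] at hqfrK
  exact hqfrK.2 hqint

theorem stmt_2 (n : ℕ) (K C₁ C₂ : Set (EuclideanSpace ℝ (Fin n)))
    (hK : Convex ℝ K) (h1K : C₁ ⊆ K) (h2K : C₂ ⊆ K)
    (h1c : IsClosed C₁) (h2c : IsClosed C₂)
    (h1 : Convex ℝ C₁) (h2 : Convex ℝ C₂)
    (hbd : frontier C₁ ∩ frontier C₂ ⊆ frontier K)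
    (hKfull : (interior K).Nonempty) (h1full : (interior C₁).Nonempty)
    (h2full : (interior C₂).Nonempty)
    (hnotsep : ¬ ∃ (a : EuclideanSpace ℝ (Fin n)) (b : ℝ), a ≠ 0 ∧
      (∀ x ∈ C₁, ⟪a, x⟫ ≤ b) ∧ (∀ x ∈ C₂, b ≤ ⟪a, x⟫)) :
    Convex ℝ (C₁ ∪ C₂) := by
  obtain ⟨w, hw1, hw2⟩ : ∃ w, w ∈ interior C₁ ∧ w ∈ interior C₂ := by
    by_contra h
    push_neg at h
    have hdisj : Disjoint (interior C₁) (interior C₂) := Set.disjoint_left.mpr h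
    obtain ⟨f, u, hfu1, hfu2⟩ := geometric_hahn_banach_open_open h1.interior isOpen_interior
      h2.interior isOpen_interior hdisj
    have hcl1 : C₁ ⊆ closure (interior C₁) := by
      intro v hv
      obtain ⟨w₁, hw₁⟩ := h1full
      have hseg : openSegment ℝ v w₁ ⊆ interior C₁ :=
        h1.openSegment_self_interior_subset_interior hv hw₁
      have hvmem : v ∈ closure (openSegment ℝ v w₁) := by
        rw [closure_openSegment]; exact left_mem_segment ℝ v w₁
      exact closure_mono hseg hvmem
    have hcl2 : C₂ ⊆ closure (interior C₂) := by
      intro v hv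
      obtain ⟨w₂, hw₂⟩ := h2full
      have hseg : openSegment ℝ v w₂ ⊆ interior C₂ :=
        h2.openSegment_self_interior_subset_interior hv hw₂
      have hvmem : v ∈ closure (openSegment ℝ v w₂) := by
        rw [closure_openSegment]; exact left_mem_segment ℝ v w₂
      exact closure_mono hseg hvmem
    have hle1 : ∀ v ∈ C₁, f v ≤ u := by
      intro v hv
      have hclosed : IsClosed {q : EuclideanSpace ℝ (Fin n) | f q ≤ u} :=
        isClosed_le f.continuous continuous_const
      have hsub : closure (interior C₁) ⊆ {q | f q ≤ u} :=
        hclosed.closure_subset_iff.mpr fun q hq => (hfu1 q hq).le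
      exact hsub (hcl1 hv)
    have hge2 : ∀ v ∈ C₂, u ≤ f v := by
      intro v hv
      have hclosed : IsClosed {q : EuclideanSpace ℝ (Fin n) | u ≤ f q} :=
        isClosed_le continuous_const f.continuous
      have hsub : closure (interior C₂) ⊆ {q | u ≤ f q} :=
        hclosed.closure_subset_iff.mpr fun q hq => (hfu2 q hq).le
      exact hsub (hcl2 hv)
    apply hnotsep
    set a := (InnerProductSpace.toDual ℝ (EuclideanSpace ℝ (Fin n))).symm f with hadef
    have hfa : ∀ v, ⟪a, v⟫ = f v := fun v => InnerProductSpace.toDual_symm_apply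
    refine ⟨a, u, ?_, fun v hv => by rw [hfa]; exact hle1 v hv,
      fun v hv => by rw [hfa]; exact hge2 v hv⟩
    intro h0
    obtain ⟨w₁, hw₁⟩ := h1full
    obtain ⟨w₂, hw₂⟩ := h2full
    have h1' := hfu1 w₁ hw₁
    have h2' := hfu2 w₂ hw₂
    rw [← hfa w₁, h0, inner_zero_left] at h1'
    rw [← hfa w₂, h0, inner_zero_left] at h2'
    linarith
  rw [convex_iff_segment_subset]
  intro x hx y hy
  rcases hx with hx1 | hx2 <;> rcases hy with hy1 | hy2
  · exact (h1.segment_subset hx1 hy1).trans Set.subset_union_left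
  · exact key_segment hK h1K h2K h1c h2c h1 h2 hbd hw1 hw2 hx1 hy2
  · have := key_segment hK h2K h1K h2c h1c h2 h1
      (by rw [Set.inter_comm]; exact hbd) hw2 hw1 hx2 hy1
    rwa [Set.union_comm] at this
  · exact (h2.segment_subset hx2 hy2).trans Set.subset_union_right
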